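/- Suppose D : ℕ → ℝ satisfies D 0 = m·δ and D i ≤ D (i-1) / (1 - rμ) for 1 ≤ i ≤ t, where m ≥ 1, 0 < rμ < 1, δ = ((1-rμ)/m)^{1/(rμ)}, and t = ⌊((1-rμ)/(rμ))·ln((1-rμ)/(mδ))⌋ + 1. Then D t ≤ 1. -/

import Mathlib

theorem stmt_4 (m : ℕ) (hm : 1 ≤ m) (r μ δ : ℝ) (t : ℕ)
    (hrμ0 : 0 < r * μ) (hrμ1 : r * μ < 1)
    (hδ : δ = ((1 - r * μ) / m) ^ ((1 : ℝ) / (r * μ)))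
    (ht : t = ⌊(1 - r * μ) / (r * μ) * Real.log ((1 - r * μ) / (m * δ))⌋₊ + 1)
    (D : ℕ → ℝ)
    (hD0 : D 0 = m * δ)
    (hDrec : ∀ i, 1 ≤ i → i ≤ t → D i ≤ D (i - 1) / (1 - r * μ)) :
    D t ≤ 1 := by
  set a := r * μ with ha
  set b := 1 - a with hb
  have hb0 : 0 < b := by simp [hb]; linarith
  have hb1 : b < 1 := by simp [hb]; linarith
  have hm0 : (0:ℝ) < m := by exact_mod_cast hm
  have hbase : 0 < b / m := div_pos hb0 hm0
  have hδ0 : 0 < δ := hδ ▸ Real.rpow_pos_of_pos hbase _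
  have hmδ0 : (0:ℝ) < m * δ := mul_pos hm0 hδ0
  -- m * δ ≤ b
  have hmδb : m * δ ≤ b := by
    have h1 : (1:ℝ) ≤ 1 / a := (one_le_div hrμ0).2 (le_of_lt hrμ1)
    have h2 : δ ≤ (b / m) ^ (1:ℝ) := by
      rw [hδ]
      have hm1 : (1:ℝ) ≤ m := by exact_mod_cast hm
      exact Real.rpow_le_rpow_of_exponent_ge hbase
        (by rw [div_le_one hm0]; linarith) h1
    rw [Real.rpow_one] at h2
    calc m * δ ≤ m * (b / m) := by nlinarith
    _ = b := by field_simp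
  -- log nonneg
  have hlog0 : 0 ≤ Real.log (b / (m * δ)) :=
    Real.log_nonneg ((one_le_div hmδ0).2 hmδb)
  -- t - 1 ≤ (b/a) * log(b/(mδ))
  have htfloor : ((t - 1 : ℕ) : ℝ) ≤ b / a * Real.log (b / (m * δ)) := by
    have hL0 : 0 ≤ b / a * Real.log (b / (m * δ)) :=
      mul_nonneg (le_of_lt (div_pos hb0 hrμ0)) hlog0
    have : t - 1 = ⌊b / a * Real.log (b / (m * δ))⌋₊ := by omega
    rw [this]
    exact Nat.floor_le hL0
  -- b ≥ exp(-(a/b))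
  have hexpb : Real.exp (-(a / b)) ≤ b := by
    have h1 : a / b + 1 ≤ Real.exp (a / b) := Real.add_one_le_exp _
    have hbne : b ≠ 0 := ne_of_gt hb0
    have h2 : a / b + 1 = 1 / b := by
      field_simp
      simp [hb]
    rw [h2] at h1
    rw [Real.exp_neg]
    rw [inv_le_comm₀ (Real.exp_pos _) hb0]
    calc b⁻¹ = 1 / b := (one_div b).symm
    _ ≤ Real.exp (a / b) := h1
  -- key: m*δ ≤ b^t
  have hkey : m * δ ≤ b ^ t := by
    have ht1 : 1 ≤ t := by omega
    have hpow : Real.exp (-(a / b) * (t - 1 : ℕ)) ≤ b ^ (t - 1) := by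
      calc Real.exp (-(a / b) * (t - 1 : ℕ)) = Real.exp (-(a / b)) ^ (t - 1 : ℕ) := by
            rw [← Real.exp_nat_mul]; ring_nf
      _ ≤ b ^ (t - 1) := pow_le_pow_left₀ (le_of_lt (Real.exp_pos _)) hexpb _
    have hstep : m * δ ≤ b * Real.exp (-(a / b) * (t - 1 : ℕ)) := by
      have h3 : a / b * ((t - 1 : ℕ) : ℝ) ≤ Real.log (b / (m * δ)) := by
        rw [div_mul_eq_mul_div, div_le_iff₀ hb0]
        calc a * ((t - 1 : ℕ) : ℝ) ≤ a * (b / a * Real.log (b / (m * δ))) :=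
              mul_le_mul_of_nonneg_left htfloor (le_of_lt hrμ0)
        _ = Real.log (b / (m * δ)) * b := by field_simp
      have h4 : m * δ / b ≤ Real.exp (-(a / b) * (t - 1 : ℕ)) := by
        rw [← Real.exp_log (div_pos hmδ0 hb0), Real.exp_le_exp]
        have : Real.log (m * δ / b) = -Real.log (b / (m * δ)) := by
          rw [← Real.log_inv]; congr 1; field_simp
        rw [this]; nlinarith
      calc m * δ = b * (m * δ / b) := by field_simp
      _ ≤ b * Real.exp (-(a / b) * (t - 1 : ℕ)) :=
          mul_le_mul_of_nonneg_left h4 (le_of_lt hb0)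
    calc m * δ ≤ b * Real.exp (-(a / b) * (t - 1 : ℕ)) := hstep
    _ ≤ b * b ^ (t - 1) := mul_le_mul_of_nonneg_left hpow (le_of_lt hb0)
    _ = b ^ t := by rw [← pow_succ']; congr 1; omega
  -- induction: D i ≤ m*δ / b^i for i ≤ t
  have hind : ∀ i, i ≤ t → D i ≤ m * δ / b ^ i := by
    intro i
    induction i with
    | zero => intro _; simp [hD0]
    | succ n ih =>
      intro hn
      have h1 : D (n + 1) ≤ D n / b := by
        have := hDrec (n + 1) (by omega) hn
        simpa using this
      have h2 : D n / b ≤ (m * δ / b ^ n) / b :=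
        div_le_div_of_nonneg_right (ih (by omega)) hb0.le
      calc D (n + 1) ≤ (m * δ / b ^ n) / b := le_trans h1 h2
      _ = m * δ / b ^ (n + 1) := by rw [div_div, ← pow_succ]
  have := hind t le_rfl
  calc D t ≤ m * δ / b ^ t := this
  _ ≤ 1 := (div_le_one (pow_pos hb0 t)).2 hkey
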